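/- Let X be a finite set of n ≥ 2 points in Euclidean space ℝ^d, partitioned into k ≥ 2 nonempty clusters X₁, …, X_k with centers c₁, …, c_k ∈ ℝ^d satisfying α-center proximity with α ≥ 2 + √3 (i.e., α·‖p − c_i‖ < ‖p − c_j‖ for every p ∈ X_i and j ≠ i). Let T be a Euclidean minimum spanning tree of X (a spanning tree on vertex set X minimizing the total Euclidean edge length), and let e = {u, v} be an edge of T of maximum length. Then: (1) u and v do not belong to the same cluster X_i; and (2) every cluster X_i is entirely contained in one of the two connected components of T with the edge e removed. -/

import Mathlib

set_option maxHeartbeats 1000000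


open scoped Classical in
/-- The total Euclidean edge length of a graph `G` on the points `p 0, …, p (n-1)`. -/
noncomputable def treeCost {n d : ℕ} (p : Fin n → EuclideanSpace ℝ (Fin d))
    (G : SimpleGraph (Fin n)) : ℝ :=
  ∑ e ∈ G.edgeFinset,
    Sym2.lift ⟨fun a b => dist (p a) (p b), fun a b => dist_comm (p a) (p b)⟩ e

open SimpleGraph

section Helpers

open scoped Classical

variable {V : Type*}

/-- An edge of an acyclic graph disconnects its endpoints when deleted. -/
lemma aux_not_reach_del {T : SimpleGraph V} (hT : T.IsAcyclic) {x y : V} (h : T.Adj x y) :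
    ¬ (T.deleteEdges {s(x, y)}).Reachable x y := by
  have hb := isAcyclic_iff_forall_adj_isBridge.mp hT h
  rw [isBridge_iff] at hb
  exact hb

/-- Every vertex of a walk-connected graph reaches one of the two endpoints of a deleted
edge. -/
lemma aux_reach_del_or {T : SimpleGraph V} {x y : V} :
    ∀ {w z : V}, T.Walk w z →
      (T.deleteEdges {s(x, y)}).Reachable w z ∨
      (T.deleteEdges {s(x, y)}).Reachable w x ∨
      (T.deleteEdges {s(x, y)}).Reachable w y := by
  intro w z W
  induction W with
  | nil => exact Or.inl (Reachable.refl _)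
  | @cons u u1 z h W ih =>
    by_cases he : s(u, u1) = s(x, y)
    · rcases Sym2.eq_iff.mp he with ⟨rfl, rfl⟩ | ⟨rfl, rfl⟩
      · exact Or.inr (Or.inl (Reachable.refl _))
      · exact Or.inr (Or.inr (Reachable.refl _))
    · have hadj : (T.deleteEdges {s(x, y)}).Adj u u1 := by
        rw [deleteEdges_adj]
        exact ⟨h, by simpa using he⟩
      rcases ih with h1 | h1 | h1
      · exact Or.inl (hadj.reachable.trans h1)
      · exact Or.inr (Or.inl (hadj.reachable.trans h1))
      · exact Or.inr (Or.inr (hadj.reachable.trans h1))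

/-- Reachability in a graph obtained by adding one edge `{a, b}`. -/
lemma aux_sup_reach {H : SimpleGraph V} {a b : V} :
    ∀ {w z : V}, (H ⊔ fromEdgeSet {s(a, b)}).Walk w z →
      H.Reachable w z ∨ (H.Reachable w a ∧ H.Reachable b z) ∨
        (H.Reachable w b ∧ H.Reachable a z) := by
  intro w z W
  induction W with
  | nil => exact Or.inl (Reachable.refl _)
  | @cons u u1 z h W ih =>
    rw [sup_adj] at h
    rcases h with hH | hF
    · rcases ih with h1 | ⟨h1, h2⟩ | ⟨h1, h2⟩
      · exact Or.inl (hH.reachable.trans h1)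
      · exact Or.inr (Or.inl ⟨hH.reachable.trans h1, h2⟩)
      · exact Or.inr (Or.inr ⟨hH.reachable.trans h1, h2⟩)
    · rw [fromEdgeSet_adj] at hF
      have := hF.1
      simp only [Set.mem_singleton_iff, Sym2.eq_iff] at this
      rcases this with ⟨rfl, rfl⟩ | ⟨rfl, rfl⟩
      · rcases ih with h1 | ⟨h1, h2⟩ | ⟨h1, h2⟩
        · exact Or.inr (Or.inl ⟨Reachable.refl _, h1⟩)
        · exact Or.inl (h1.symm.trans h2)
        · exact Or.inl h2
      · rcases ih with h1 | ⟨h1, h2⟩ | ⟨h1, h2⟩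
        · exact Or.inr (Or.inr ⟨Reachable.refl _, h1⟩)
        · exact Or.inl h2
        · exact Or.inl (h1.symm.trans h2)

/-- Along any walk whose endpoints get different labels there is a crossing edge, and the
walk decomposes at the first such edge. -/
lemma aux_exists_crossing {K : Type*} {G : SimpleGraph V} (σ : V → K) :
    ∀ {a w : V} (W : G.Walk a w), σ w ≠ σ a →
    ∃ (x y : V) (Q : G.Walk a x) (Q' : G.Walk y w),
      σ x = σ a ∧ σ y ≠ σ a ∧ G.Adj x y ∧ W.edges = Q.edges ++ s(x, y) :: Q'.edges := by
  intro a w W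
  induction W with
  | nil => exact fun h => absurd rfl h
  | @cons u u1 w h W ih =>
    intro hw
    by_cases h1 : σ u1 = σ u
    · obtain ⟨x, y, Q, Q', hx, hy, hadj, hE⟩ := ih (by rw [h1]; exact hw)
      refine ⟨x, y, Walk.cons h Q, Q', by rw [hx, h1], by rw [h1] at hy; exact hy, hadj, ?_⟩
      simp [Walk.edges_cons, hE]
    · exact ⟨u, u1, Walk.nil, W, rfl, h1, h, by simp [Walk.edges_cons]⟩

/-- The key exchange inequality: in a minimum spanning tree, a tree edge `{x, y}` is at most
as long as any pair `{a, b}` spanning the cut obtained by deleting it. -/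
lemma aux_swap_le {n d : ℕ} (p : Fin n → EuclideanSpace ℝ (Fin d))
    (T : SimpleGraph (Fin n)) (hT : T.IsTree)
    (hmin : ∀ G : SimpleGraph (Fin n), G.IsTree → treeCost p T ≤ treeCost p G)
    {x y a b : Fin n} (hxy : T.Adj x y)
    (hab : ¬ (T.deleteEdges {s(x, y)}).Reachable a b) :
    dist (p x) (p y) ≤ dist (p a) (p b) := by
  have hne : a ≠ b := fun h => hab (h ▸ Reachable.refl a)
  by_cases hsame : s(a, b) = s(x, y)
  · rcases Sym2.eq_iff.mp hsame with ⟨rfl, rfl⟩ | ⟨rfl, rfl⟩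
    · exact le_refl _
    · exact le_of_eq (_root_.dist_comm _ _)
  set T' := T.deleteEdges {s(x, y)} with hT'def
  set G := T' ⊔ fromEdgeSet {s(a, b)} with hGdef
  have hT'le : T' ≤ T := T.deleteEdges_le _
  have hGadj : G.Adj a b := by
    rw [hGdef, sup_adj]
    exact Or.inr ((fromEdgeSet_adj _).mpr ⟨rfl, hne⟩)
  have hcomp : ∀ w : Fin n, T'.Reachable w x ∨ T'.Reachable w y := by
    intro w
    obtain ⟨W⟩ := hT.isConnected w x
    rcases aux_reach_del_or (x := x) (y := y) W with h | h | h
    · exact Or.inl h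
    · exact Or.inl h
    · exact Or.inr h
  have hbridge : ¬ T'.Reachable x y := aux_not_reach_del hT.IsAcyclic hxy
  have hxyG : G.Reachable x y := by
    rcases hcomp a with ha | ha <;> rcases hcomp b with hb | hb
    · exact absurd (ha.trans hb.symm) hab
    · exact (ha.mono le_sup_left).symm.trans
        (hGadj.reachable.trans (hb.mono le_sup_left))
    · exact (hb.mono le_sup_left).symm.trans
        (hGadj.symm.reachable.trans (ha.mono le_sup_left))
    · exact absurd (ha.trans hb.symm) hab
  have hconn : G.Connected := by
    rw [connected_iff]
    refine ⟨fun w z => ?_, ⟨x⟩⟩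
    have hw : G.Reachable w x := by
      rcases hcomp w with h | h
      · exact h.mono le_sup_left
      · exact (h.mono le_sup_left).trans hxyG.symm
    have hz : G.Reachable z x := by
      rcases hcomp z with h | h
      · exact h.mono le_sup_left
      · exact (h.mono le_sup_left).trans hxyG.symm
    exact hw.trans hz.symm
  have hac : G.IsAcyclic := by
    rw [isAcyclic_iff_forall_adj_isBridge]
    intro w z hwz
    rw [isBridge_iff]
    refine fun hr => ?_
    have hr' : (G.deleteEdges {s(w, z)}).Reachable w z := hr
    by_cases hwzab : s(w, z) = s(a, b)
    · have hle : G.deleteEdges {s(w, z)} ≤ T' := by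
        intro i j hij
        rw [deleteEdges_adj] at hij
        obtain ⟨hij1, hij2⟩ := hij
        rw [Set.mem_singleton_iff] at hij2
        rw [hGdef, sup_adj] at hij1
        rcases hij1 with h | h
        · exact h
        · exfalso
          apply hij2
          have hm := ((fromEdgeSet_adj _).mp h).1
          rw [Set.mem_singleton_iff] at hm
          rw [hwzab]
          exact hm
      have : T'.Reachable w z := hr'.mono hle
      rcases Sym2.eq_iff.mp hwzab with ⟨rfl, rfl⟩ | ⟨rfl, rfl⟩
      · exact hab this
      · exact hab this.symm
    · have hTadj : T'.Adj w z := by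
        have hwz' := hwz
        rw [hGdef, sup_adj] at hwz'
        rcases hwz' with h | h
        · exact h
        · exfalso
          apply hwzab
          have hm := ((fromEdgeSet_adj _).mp h).1
          rwa [Set.mem_singleton_iff] at hm
      set H' := T.deleteEdges {s(w, z), s(x, y)} with hH'def
      have hle : G.deleteEdges {s(w, z)} ≤ H' ⊔ fromEdgeSet {s(a, b)} := by
        intro i j hij
        rw [deleteEdges_adj] at hij
        obtain ⟨hij1, hij2⟩ := hij
        rw [Set.mem_singleton_iff] at hij2
        rw [hGdef, sup_adj] at hij1
        rw [sup_adj]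
        rcases hij1 with h | h
        · rw [hT'def, deleteEdges_adj] at h
          left
          rw [hH'def, deleteEdges_adj]
          refine ⟨h.1, ?_⟩
          simp only [Set.mem_insert_iff, Set.mem_singleton_iff, not_or]
          refine ⟨hij2, ?_⟩
          intro hm
          exact h.2 (by rw [hm]; exact Set.mem_singleton _)
        · exact Or.inr h
      have hH'T' : H' ≤ T' := by
        intro i j hij
        rw [hH'def, deleteEdges_adj] at hij
        rw [hT'def, deleteEdges_adj]
        refine ⟨hij.1, fun hm => hij.2 ?_⟩
        rw [Set.mem_singleton_iff] at hm
        exact Set.mem_insert_iff.mpr (Or.inr (by rw [hm]; exact Set.mem_singleton _))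
      have hH'wz : H' ≤ T.deleteEdges {s(w, z)} := by
        intro i j hij
        rw [hH'def, deleteEdges_adj] at hij
        rw [deleteEdges_adj]
        refine ⟨hij.1, fun hm => hij.2 ?_⟩
        rw [Set.mem_singleton_iff] at hm
        exact Set.mem_insert_iff.mpr (Or.inl hm)
      obtain ⟨W⟩ := hr'.mono hle
      rcases aux_sup_reach W with h1 | ⟨h1, h2⟩ | ⟨h1, h2⟩
      · exact absurd (h1.mono hH'wz) (aux_not_reach_del hT.IsAcyclic (hT'le hTadj))
      · exact hab (((h1.mono hH'T').symm.trans hTadj.reachable).trans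
          (h2.mono hH'T').symm)
      · exact hab (((h2.mono hH'T').trans hTadj.symm.reachable).trans
          (h1.mono hH'T'))
  have hGtree : G.IsTree := ⟨hconn, hac⟩
  have hxymem : s(x, y) ∈ T.edgeFinset := by
    rw [mem_edgeFinset, mem_edgeSet]; exact hxy
  have hnab : s(a, b) ∉ T.edgeFinset.erase s(x, y) := by
    rw [Finset.mem_erase, mem_edgeFinset, mem_edgeSet]
    rintro ⟨hne', hmem⟩
    have : T'.Adj a b := by
      rw [hT'def, deleteEdges_adj]
      exact ⟨hmem, by simpa using hsame⟩
    exact hab this.reachable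
  have hedgesG : ∀ (h1 : Fintype G.edgeSet),
      @SimpleGraph.edgeFinset _ G h1 = insert s(a, b) (T.edgeFinset.erase s(x, y)) := by
    intro h1
    ext e
    rw [mem_edgeFinset, Finset.mem_insert, Finset.mem_erase, mem_edgeFinset, hGdef,
      edgeSet_sup, hT'def, edgeSet_deleteEdges, edgeSet_fromEdgeSet]
    constructor
    · rintro (⟨hm, hn⟩ | ⟨hm, _⟩)
      · exact Or.inr ⟨by simpa using hn, hm⟩
      · exact Or.inl (by simpa using hm)
    · rintro (rfl | ⟨hn, hm⟩)
      · exact Or.inr ⟨rfl, by simp [Sym2.isDiag_iff_proj_eq, hne]⟩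
      · exact Or.inl ⟨hm, by simpa using hn⟩
  have huniT : ∀ (h1 : Fintype T.edgeSet), @SimpleGraph.edgeFinset _ T h1 = T.edgeFinset :=
    fun h1 => congrArg (fun h : Fintype T.edgeSet => @SimpleGraph.edgeFinset _ T h)
      (Subsingleton.elim _ _)
  have hfin := hmin G hGtree
  unfold treeCost at hfin
  rw [hedgesG _, huniT _, Finset.sum_insert hnab, Finset.sum_erase_eq_sub hxymem] at hfin
  simp only [Sym2.lift_mk] at hfin
  linarith

end Helpers

open scoped Classical in
/-- Let `X = {p 0, …, p (n−1)}` (`n ≥ 2` distinct points in `ℝ^d`) be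
partitioned into `k ≥ 2` nonempty clusters via the assignment `σ`, with centers `c`
satisfying `α`-center proximity for `α ≥ 2 + √3`. Let `T` be a Euclidean minimum spanning
tree of the points and let `{u, v}` be a longest edge of `T`. Then `u` and `v` lie in
different clusters, and each cluster is contained in a single connected component of
`T` minus the edge `{u, v}`. -/
theorem mst_longest_edge_separates_clusters {n d k : ℕ} (hn : 2 ≤ n) (hk : 2 ≤ k)
    (p : Fin n → EuclideanSpace ℝ (Fin d)) (hinj : Function.Injective p)
    (σ : Fin n → Fin k) (hsurj : Function.Surjective σ)
    (c : Fin k → EuclideanSpace ℝ (Fin d))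
    (α : ℝ) (hα : 2 + Real.sqrt 3 ≤ α)
    (hprox : ∀ a : Fin n, ∀ j : Fin k, j ≠ σ a →
      α * dist (p a) (c (σ a)) < dist (p a) (c j))
    (T : SimpleGraph (Fin n)) (hT : T.IsTree)
    (hmin : ∀ G : SimpleGraph (Fin n), G.IsTree → treeCost p T ≤ treeCost p G)
    (u v : Fin n) (huv : T.Adj u v)
    (hmax : ∀ a b : Fin n, T.Adj a b → dist (p a) (p b) ≤ dist (p u) (p v)) :
    σ u ≠ σ v ∧
    (∀ i : Fin k, ∀ a b : Fin n, σ a = i → σ b = i →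
      (T.deleteEdges {s(u, v)}).Reachable a b) := by
  classical
  have hsqrt3 : (1 : ℝ) ≤ Real.sqrt 3 := by
    rw [show (1 : ℝ) = Real.sqrt 1 by simp]
    exact Real.sqrt_le_sqrt (by norm_num)
  have hα3 : 3 ≤ α := by linarith
  have hαsq : 3 ≤ (α - 2) * (α - 2) := by
    nlinarith [Real.sq_sqrt (by norm_num : (0:ℝ) ≤ 3), Real.sqrt_nonneg 3]
  -- Geometry: inter-cluster distances are large.
  have hG1 : ∀ a b : Fin n, σ a ≠ σ b →
      (α - 1) * dist (p a) (c (σ a)) < dist (p a) (p b) := by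
    intro a b hab
    have h1 := hprox a (σ b) (Ne.symm hab)
    have h2 := hprox b (σ a) hab
    have t1 : dist (p a) (c (σ b)) ≤ dist (p a) (p b) + dist (p b) (c (σ b)) :=
      dist_triangle _ _ _
    have t2 : dist (p b) (c (σ a)) ≤ dist (p b) (p a) + dist (p a) (c (σ a)) :=
      dist_triangle _ _ _
    rw [dist_comm (p b) (p a)] at t2
    have key : (α + 1) * ((α - 1) * dist (p a) (c (σ a))) < (α + 1) * dist (p a) (p b) := by
      have k1 : α * (α * dist (p a) (c (σ a))) < α * (dist (p a) (p b) + dist (p b) (c (σ b))) :=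
        mul_lt_mul_of_pos_left (lt_of_lt_of_le h1 t1) (by linarith)
      nlinarith [h2, t2]
    exact lt_of_mul_lt_mul_left key (by linarith)
  -- Part 1.
  have part1 : σ u ≠ σ v := by
    intro hσuv
    -- find a point in another cluster
    obtain ⟨j, hj⟩ := Fintype.exists_ne_of_one_lt_card (by simp only [Fintype.card_fin]; omega : 1 < Fintype.card (Fin k)) (σ u)
    obtain ⟨w, hw⟩ := hsurj j
    have hwne : σ w ≠ σ u := by rw [hw]; exact hj
    obtain ⟨W⟩ := hT.isConnected u w
    obtain ⟨x, y, Q, Q', hx, hy, hadjxy, hE⟩ := aux_exists_crossing σ W hwne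
    -- swap across the cut of {u, v}
    have hbr : ¬ (T.deleteEdges {s(u, v)}).Reachable u v := aux_not_reach_del hT.IsAcyclic huv
    have hswap : dist (p u) (p v) ≤ dist (p u) (p x) ∨
        dist (p u) (p v) ≤ dist (p v) (p x) := by
      by_cases hux : (T.deleteEdges {s(u, v)}).Reachable u x
      · right
        refine aux_swap_le p T hT hmin huv (fun hvx => ?_)
        exact hbr (hux.trans hvx.symm)
      · left
        exact aux_swap_le p T hT hmin huv hux
    -- abbreviations
    set R := dist (p u) (c (σ u)) with hRdef
    set R' := dist (p v) (c (σ u)) with hR'def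
    set s := dist (p x) (c (σ u)) with hsdef
    set t := dist (p y) (c (σ y)) with htdef
    set D := dist (p x) (p y) with hDdef
    set L := dist (p u) (p v) with hLdef
    set δ := dist (c (σ u)) (c (σ y)) with hδdef
    have hyne : σ y ≠ σ u := hy
    have h1 : (α - 1) * s < D := by
      have := hG1 x y (by rw [hx]; exact fun h => hyne h.symm)
      rwa [hx] at this
    have h2 : (α - 1) * t < D := by
      have := hG1 y x (by rw [hx]; exact hyne)
      rw [dist_comm (p y) (p x)] at this
      exact this
    have h3 : D ≤ L := hmax x y hadjxy
    have h4 : L ≤ R + s ∨ L ≤ R' + s := by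
      rcases hswap with h | h
      · left
        calc L ≤ dist (p u) (p x) := h
          _ ≤ dist (p u) (c (σ u)) + dist (c (σ u)) (p x) := dist_triangle _ _ _
          _ = R + s := by rw [dist_comm (c (σ u)) (p x)]
      · right
        calc L ≤ dist (p v) (p x) := h
          _ ≤ dist (p v) (c (σ u)) + dist (c (σ u)) (p x) := dist_triangle _ _ _
          _ = R' + s := by rw [dist_comm (c (σ u)) (p x)]
    have h5 : δ ≤ s + D + t := by
      calc δ ≤ dist (c (σ u)) (p x) + dist (p x) (c (σ y)) := dist_triangle _ _ _
        _ ≤ dist (c (σ u)) (p x) + (dist (p x) (p y) + dist (p y) (c (σ y))) := by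
            have := dist_triangle (p x) (p y) (c (σ y))
            linarith
        _ = s + D + t := by rw [dist_comm (c (σ u)) (p x)]; ring
    have h6 : (α - 1) * R < δ := by
      have hp1 := hprox u (σ y) hyne
      have t1 : dist (p u) (c (σ y)) ≤ dist (p u) (c (σ u)) + dist (c (σ u)) (c (σ y)) :=
        dist_triangle _ _ _
      rw [← hRdef, ← hδdef] at t1
      rw [← hRdef] at hp1
      linarith
    have h6' : (α - 1) * R' < δ := by
      have hp1 := hprox v (σ y) (by rw [← hσuv]; exact hyne)
      rw [← hσuv] at hp1
      have t1 : dist (p v) (c (σ y)) ≤ dist (p v) (c (σ u)) + dist (c (σ u)) (c (σ y)) :=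
        dist_triangle _ _ _
      rw [← hR'def, ← hδdef] at t1
      rw [← hR'def] at hp1
      linarith
    have hsnn : 0 ≤ s := dist_nonneg
    have htnn : 0 ≤ t := dist_nonneg
    -- unified contradiction for either case
    have final : ∀ Z : ℝ, 0 ≤ Z → (α - 1) * Z < δ → L ≤ Z + s → False := by
      intro Z hZnn h6Z h4Z
      have i' : (α - 2) * s < Z := by nlinarith [h1, h3, h4Z]
      have ii' : (α - 1) * t < Z + s := by nlinarith [h2, h3, h4Z]
      have iii' : (α - 2) * Z < 2 * s + t := by nlinarith [h6Z, h5, h3, h4Z]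
      have hpos2 : (0:ℝ) < α - 2 := by linarith
      have m1 := mul_lt_mul_of_pos_left iii' hpos2
      have m2 := mul_lt_mul_of_pos_left ii' hpos2
      have hZstep : (α - 2) * t < Z := by
        have inner : (α - 1) * ((α - 2) * t) < (α - 1) * Z := by nlinarith [m2, i']
        exact lt_of_mul_lt_mul_left inner (by linarith)
      nlinarith [m1, i', hZstep, mul_le_mul_of_nonneg_right hαsq hZnn]
    rcases h4 with h4Z | h4Z
    · exact final R dist_nonneg h6 h4Z
    · exact final R' dist_nonneg h6' h4Z
  refine ⟨part1, ?_⟩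
  -- Part 2.
  intro i a b ha hb
  by_contra hreach
  obtain ⟨W0⟩ := hT.isConnected a b
  set P : T.Walk a b := W0.toPath.1 with hPdef
  have hP : P.IsPath := W0.toPath.2
  have hedge : s(u, v) ∈ P.edges := by
    by_contra hne
    apply hreach
    exact ⟨P.toDeleteEdges {s(u, v)} (by
      intro e he
      simp only [Set.mem_singleton_iff]
      intro hcon
      exact hne (hcon ▸ he))⟩
  -- pick the endpoint of {u,v} not in cluster i
  have hz : ∃ z : Fin n, z ∈ P.support ∧ σ z ≠ i := by
    by_cases hu : σ u = i
    · refine ⟨v, P.snd_mem_support_of_mem_edges hedge, ?_⟩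
      rw [← hu]; exact fun h => part1 h.symm
    · exact ⟨u, P.fst_mem_support_of_mem_edges hedge, hu⟩
  obtain ⟨z, hzsup, hzi⟩ := hz
  -- convexity argument: split P at z and find crossings on both sides
  set P1 := P.takeUntil z hzsup with hP1def
  set P2 := P.dropUntil z hzsup with hP2def
  have hP1path : P1.IsPath := hP.takeUntil hzsup
  have hP2path : P2.IsPath := hP.dropUntil hzsup
  have hPE : P.edges = P1.edges ++ P2.edges := by
    rw [hP1def, hP2def, ← Walk.edges_append, Walk.take_spec]
  have hnodup : P.edges.Nodup := hP.isTrail.edges_nodup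
  have hdisj : ∀ e, e ∈ P1.edges → e ∉ P2.edges := by
    rw [hPE] at hnodup
    exact fun e h1 h2 => (List.disjoint_of_nodup_append hnodup) h1 h2
  obtain ⟨x1, y1, Q1, Q1', hx1, hy1, hadj1, hE1⟩ :=
    aux_exists_crossing σ P1 (by rw [ha]; exact hzi)
  obtain ⟨x2, y2, Q2, Q2', hx2, hy2, hadj2, hE2⟩ :=
    aux_exists_crossing σ P2.reverse (by rw [hb]; exact hzi)
  rw [ha] at hx1 hy1
  rw [hb] at hx2 hy2
  set e1 := s(x1, y1) with he1def
  set e2 := s(x2, y2) with he2def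
  have hP1nodup : P1.edges.Nodup := hP1path.isTrail.edges_nodup
  have hP2nodup : P2.reverse.edges.Nodup := by
    rw [Walk.edges_reverse]
    exact List.nodup_reverse.mpr hP2path.isTrail.edges_nodup
  have he1P1 : e1 ∈ P1.edges := by rw [hE1]; simp
  have he2P2 : e2 ∈ P2.edges := by
    have : e2 ∈ P2.reverse.edges := by rw [hE2]; simp
    rwa [Walk.edges_reverse, List.mem_reverse] at this
  have he1Q1 : e1 ∉ Q1.edges := by
    rw [hE1] at hP1nodup
    have := List.disjoint_of_nodup_append hP1nodup
    exact fun h => this h (by simp)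
  have he1Q1' : e1 ∉ Q1'.edges := by
    rw [hE1] at hP1nodup
    have := (List.nodup_append.mp hP1nodup).2.1
    exact (List.nodup_cons.mp this).1
  have he2Q2 : e2 ∉ Q2.edges := by
    rw [hE2] at hP2nodup
    have := List.disjoint_of_nodup_append hP2nodup
    exact fun h => this h (by simp)
  have he2Q2' : e2 ∉ Q2'.edges := by
    rw [hE2] at hP2nodup
    have := (List.nodup_append.mp hP2nodup).2.1
    exact (List.nodup_cons.mp this).1
  have hQ2sub : ∀ e, e ∈ Q2.edges → e ∈ P2.edges := by
    intro e he
    have : e ∈ P2.reverse.edges := by rw [hE2]; simp [he]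
    rwa [Walk.edges_reverse, List.mem_reverse] at this
  have hQ2'sub : ∀ e, e ∈ Q2'.edges → e ∈ P2.edges := by
    intro e he
    have : e ∈ P2.reverse.edges := by rw [hE2]; simp [he]
    rwa [Walk.edges_reverse, List.mem_reverse] at this
  have hQ1sub : ∀ e, e ∈ Q1.edges → e ∈ P1.edges := by
    intro e he; rw [hE1]; simp [he]
  have hQ1'sub : ∀ e, e ∈ Q1'.edges → e ∈ P1.edges := by
    intro e he; rw [hE1]; simp [he]
  have he1P2 : e1 ∉ P2.edges := hdisj e1 he1P1
  have he2P1 : e2 ∉ P1.edges := fun h => hdisj e2 h he2P2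
  -- reachability in T minus e1
  set H1 := T.deleteEdges {e1} with hH1def
  have h1ax1 : H1.Reachable a x1 :=
    ⟨Q1.toDeleteEdges _ (fun e he hm => he1Q1 ((Set.mem_singleton_iff.mp hm) ▸ he))⟩
  have h1y1z : H1.Reachable y1 z :=
    ⟨Q1'.toDeleteEdges _ (fun e he hm => he1Q1' ((Set.mem_singleton_iff.mp hm) ▸ he))⟩
  have h1zb : H1.Reachable z b :=
    ⟨P2.toDeleteEdges _ (fun e he hm => he1P2 ((Set.mem_singleton_iff.mp hm) ▸ he))⟩
  have h1bx2 : H1.Reachable b x2 :=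
    ⟨Q2.toDeleteEdges _ (fun e he hm => he1P2 ((Set.mem_singleton_iff.mp hm) ▸ hQ2sub e he))⟩
  have hbr1 : ¬ H1.Reachable x1 y1 := aux_not_reach_del hT.IsAcyclic hadj1
  have hcut1 : ¬ H1.Reachable x1 x2 := by
    intro h
    exact hbr1 (h.trans ((h1y1z.trans (h1zb.trans h1bx2)).symm))
  have hswap1 : dist (p x1) (p y1) ≤ dist (p x1) (p x2) :=
    aux_swap_le p T hT hmin hadj1 hcut1
  -- reachability in T minus e2
  set H2 := T.deleteEdges {e2} with hH2def
  have h2bx2 : H2.Reachable b x2 :=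
    ⟨Q2.toDeleteEdges _ (fun e he hm => he2Q2 ((Set.mem_singleton_iff.mp hm) ▸ he))⟩
  have h2y2z : H2.Reachable y2 z :=
    ⟨Q2'.toDeleteEdges _ (fun e he hm => he2Q2' ((Set.mem_singleton_iff.mp hm) ▸ he))⟩
  have h2az : H2.Reachable a z :=
    ⟨P1.toDeleteEdges _ (fun e he hm => he2P1 ((Set.mem_singleton_iff.mp hm) ▸ he))⟩
  have h2ax1 : H2.Reachable a x1 :=
    ⟨Q1.toDeleteEdges _ (fun e he hm => he2P1 ((Set.mem_singleton_iff.mp hm) ▸ hQ1sub e he))⟩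
  have hbr2 : ¬ H2.Reachable x2 y2 := aux_not_reach_del hT.IsAcyclic hadj2
  have hcut2 : ¬ H2.Reachable x2 x1 := by
    intro h
    exact hbr2 (h.trans ((h2y2z.trans (h2az.symm.trans h2ax1)).symm))
  have hswap2 : dist (p x2) (p y2) ≤ dist (p x2) (p x1) :=
    aux_swap_le p T hT hmin hadj2 hcut2
  -- geometry
  set r1 := dist (p x1) (c i) with hr1def
  set r2 := dist (p x2) (c i) with hr2def
  have hg1 : (α - 1) * r1 < dist (p x1) (p x2) := by
    have := hG1 x1 y1 (by rw [hx1]; exact fun h => hy1 h.symm)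
    rw [hx1] at this
    exact lt_of_lt_of_le this hswap1
  have hg2 : (α - 1) * r2 < dist (p x2) (p x1) := by
    have := hG1 x2 y2 (by rw [hx2]; exact fun h => hy2 h.symm)
    rw [hx2] at this
    exact lt_of_lt_of_le this hswap2
  have htri : dist (p x1) (p x2) ≤ r1 + r2 := by
    calc dist (p x1) (p x2) ≤ dist (p x1) (c i) + dist (c i) (p x2) := dist_triangle _ _ _
      _ = r1 + r2 := by rw [dist_comm (c i) (p x2)]
  rw [dist_comm (p x2) (p x1)] at hg2
  have hr1nn : 0 ≤ r1 := dist_nonneg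
  have hr2nn : 0 ≤ r2 := dist_nonneg
  nlinarith [hg1, hg2, htri, hr1nn, hr2nn, hα3]
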